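/- arXiv:1806.00188 — 6 statements merged into one kernel-verified Lean document; each statement's English description precedes it below -/
import Mathlib

section
/- The optimal values of the edge-selection problem (maximize f_e(E') over E' ⊆ E subject to c_w(E') ≤ b) and the vertex-selection problem (maximize f_e(edges(W)) over W ⊆ V subject to Σ_{v∈W} w(v) ≤ b) are equal, where f_e is normalized, monotone, and submodular. -/
open scoped Classical
open Finset

/-- The set of edges of `G` having at least one endpoint in `W`. -/
noncomputable def edgesOf {V : Type*} [Fintype V] [DecidableEq V]
    (G : SimpleGraph V) (W : Finset V) : Finset (Sym2 V) :=
  Finset.univ.filter (fun e => e ∈ G.edgeSet ∧ ∃ v ∈ W, v ∈ e)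

/-- `C` is a vertex cover of the edge set `E'`. -/
def IsCover {V : Type*} (C : Finset V) (E' : Finset (Sym2 V)) : Prop :=
  ∀ e ∈ E', ∃ v ∈ C, v ∈ e

/-- Minimum weight of a vertex cover of the edge set `E'`. -/
noncomputable def coverWeight {V : Type*} [Fintype V] [DecidableEq V]
    (w : V → ℝ) (E' : Finset (Sym2 V)) : ℝ :=
  sInf {x : ℝ | ∃ C : Finset V, IsCover C E' ∧ x = ∑ v ∈ C, w v}

lemma sym2_exists_mem {V : Type*} (e : Sym2 V) : ∃ v, v ∈ e := by
  induction e using Sym2.ind with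
  | _ x y => exact ⟨x, Sym2.mem_mk_left x y⟩

lemma coverWeight_attained {V : Type*} [Fintype V] [DecidableEq V]
    (w : V → ℝ) (E' : Finset (Sym2 V)) :
    ∃ C : Finset V, IsCover C E' ∧ coverWeight w E' = ∑ v ∈ C, w v := by
  set S := {x : ℝ | ∃ C : Finset V, IsCover C E' ∧ x = ∑ v ∈ C, w v} with hS
  have hfin : S.Finite := by
    have hsub : S ⊆ Set.range (fun C : Finset V => ∑ v ∈ C, w v) := by
      rintro x ⟨C, _, rfl⟩; exact ⟨C, rfl⟩
    exact (Set.finite_range _).subset hsub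
  have hne : S.Nonempty := by
    refine ⟨∑ v ∈ (Finset.univ : Finset V), w v, Finset.univ, fun e _ => ?_, rfl⟩
    obtain ⟨v, hv⟩ := sym2_exists_mem e
    exact ⟨v, Finset.mem_univ v, hv⟩
  exact hne.csInf_mem hfin

lemma coverWeight_le {V : Type*} [Fintype V] [DecidableEq V]
    (w : V → ℝ) (hw : ∀ v, 0 ≤ w v) {C : Finset V} {E' : Finset (Sym2 V)}
    (hC : IsCover C E') : coverWeight w E' ≤ ∑ v ∈ C, w v := by
  apply csInf_le
  · refine ⟨0, ?_⟩
    rintro x ⟨D, _, rfl⟩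
    exact Finset.sum_nonneg fun v _ => hw v
  · exact ⟨C, hC, rfl⟩

/-- The optimal values of the edge-selection problem and the vertex-selection
problem coincide. -/
theorem OPTe_eq_OPTv
    {V : Type*} [Fintype V] [DecidableEq V] (G : SimpleGraph V)
    (w : V → ℝ) (hw : ∀ v, 0 < w v) (b : ℝ) (hb : 0 < b)
    (fe : Finset (Sym2 V) → ℝ)
    (hnonneg : ∀ A, 0 ≤ fe A)
    (hnorm : fe ∅ = 0)
    (hmono : ∀ A B, A ⊆ B → fe A ≤ fe B)
    (hsub : ∀ A B, fe (A ∪ B) + fe (A ∩ B) ≤ fe A + fe B) :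
    sSup {y : ℝ | ∃ E' : Finset (Sym2 V),
        (∀ e ∈ E', e ∈ G.edgeSet) ∧ coverWeight w E' ≤ b ∧ y = fe E'} =
    sSup {y : ℝ | ∃ W : Finset V, (∑ v ∈ W, w v) ≤ b ∧ y = fe (edgesOf G W)} := by
  set S1 := {y : ℝ | ∃ E' : Finset (Sym2 V),
      (∀ e ∈ E', e ∈ G.edgeSet) ∧ coverWeight w E' ≤ b ∧ y = fe E'} with hS1
  set S2 := {y : ℝ | ∃ W : Finset V, (∑ v ∈ W, w v) ≤ b ∧ y = fe (edgesOf G W)} with hS2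
  have hbdd1 : BddAbove S1 := by
    refine ((Set.finite_range fe).subset ?_).bddAbove
    rintro y ⟨E', _, _, rfl⟩; exact ⟨E', rfl⟩
  have hbdd2 : BddAbove S2 := by
    refine ((Set.finite_range fe).subset ?_).bddAbove
    rintro y ⟨W, _, rfl⟩; exact ⟨edgesOf G W, rfl⟩
  have hne1 : S1.Nonempty := by
    refine ⟨fe ∅, ∅, by simp, ?_, rfl⟩
    calc coverWeight w (∅ : Finset (Sym2 V)) ≤ ∑ v ∈ (∅ : Finset V), w v :=
          coverWeight_le w (fun v => (hw v).le) (fun e he => absurd he (by simp))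
      _ = 0 := by simp
      _ ≤ b := hb.le
  have hne2 : S2.Nonempty := ⟨fe (edgesOf G ∅), ∅, by simpa using hb.le, rfl⟩
  apply le_antisymm
  · refine csSup_le hne1 ?_
    rintro y ⟨E', hE, hcov, rfl⟩
    obtain ⟨C, hC, hEq⟩ := coverWeight_attained w E'
    have hsumC : ∑ v ∈ C, w v ≤ b := hEq ▸ hcov
    have hsubE : E' ⊆ edgesOf G C := by
      intro e he
      simp only [edgesOf, Finset.mem_filter, Finset.mem_univ, true_and]
      exact ⟨hE e he, hC e he⟩
    exact le_trans (hmono _ _ hsubE) (le_csSup hbdd2 ⟨C, hsumC, rfl⟩)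
  · refine csSup_le hne2 ?_
    rintro y ⟨W, hW, rfl⟩
    refine le_csSup hbdd1 ⟨edgesOf G W, ?_, ?_, rfl⟩
    · intro e he
      exact ((Finset.mem_filter.mp he).2).1
    · refine le_trans (coverWeight_le w (fun v => (hw v).le) ?_) hW
      intro e he
      exact ((Finset.mem_filter.mp he).2).2
end

section
/- If W ⊆ V is feasible for the vertex-selection problem (Σ_{v∈W} w(v) ≤ b) and satisfies f_e(edges(W)) ≥ α · OPT_v, where OPT_v is the optimal value of the vertex-selection problem, then edges(W) is feasible for the edge-selection problem and f_e(edges(W)) ≥ α · OPT_e, where OPT_e is the optimal value of the edge-selection problem. (Approximation factor preserving reduction.) -/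
open scoped Classical
open Finset

lemma coverSet_finite {V : Type*} [Fintype V] [DecidableEq V]
    (w : V → ℝ) (E' : Finset (Sym2 V)) :
    ({x : ℝ | ∃ C : Finset V, IsCover C E' ∧ x = ∑ v ∈ C, w v}).Finite := by
  apply Set.Finite.subset (Set.finite_range (fun C : Finset V => ∑ v ∈ C, w v))
  rintro x ⟨C, _, rfl⟩
  exact ⟨C, rfl⟩

/-- An `α`-approximate feasible solution of the vertex-selection problem maps (via
`edges`) to an `α`-approximate feasible solution of the edge-selection problem. -/
theorem approx_factor_preserving
    {V : Type*} [Fintype V] [DecidableEq V] (G : SimpleGraph V)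
    (w : V → ℝ) (hw : ∀ v, 0 < w v) (b : ℝ) (hb : 0 < b)
    (α : ℝ) (hα0 : 0 < α) (hα1 : α ≤ 1)
    (fe : Finset (Sym2 V) → ℝ)
    (hnonneg : ∀ A, 0 ≤ fe A)
    (hnorm : fe ∅ = 0)
    (hmono : ∀ A B, A ⊆ B → fe A ≤ fe B)
    (hsub : ∀ A B, fe (A ∪ B) + fe (A ∩ B) ≤ fe A + fe B)
    (W : Finset V) (hfeas : (∑ v ∈ W, w v) ≤ b)
    (happrox : α * sSup {y : ℝ | ∃ W' : Finset V,
        (∑ v ∈ W', w v) ≤ b ∧ y = fe (edgesOf G W')} ≤ fe (edgesOf G W)) :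
    coverWeight w (edgesOf G W) ≤ b ∧
    α * sSup {y : ℝ | ∃ E' : Finset (Sym2 V),
        (∀ e ∈ E', e ∈ G.edgeSet) ∧ coverWeight w E' ≤ b ∧ y = fe E'} ≤
      fe (edgesOf G W) := by
  -- S_v : the value set of the vertex-selection problem
  set Sv : Set ℝ := {y : ℝ | ∃ W' : Finset V,
      (∑ v ∈ W', w v) ≤ b ∧ y = fe (edgesOf G W')} with hSv
  have hSvfin : Sv.Finite := by
    apply Set.Finite.subset (Set.finite_range (fun W' : Finset V => fe (edgesOf G W')))
    rintro x ⟨W', _, rfl⟩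
    exact ⟨W', rfl⟩
  have hSvbdd : BddAbove Sv := hSvfin.bddAbove
  have hWcover : IsCover W (edgesOf G W) := by
    intro e he
    simp only [edgesOf, Finset.mem_filter] at he
    exact he.2.2
  constructor
  · -- feasibility
    refine le_trans (csInf_le ((coverSet_finite w _).bddBelow) ?_) hfeas
    exact ⟨W, hWcover, rfl⟩
  · -- approximation
    refine le_trans ?_ happrox
    apply mul_le_mul_of_nonneg_left ?_ hα0.le
    -- sSup S_e ≤ sSup S_v
    have hzero : (0:ℝ) ∈ Sv := by
      refine ⟨∅, by simpa using hb.le, ?_⟩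
      have : edgesOf G (∅ : Finset V) = ∅ := by
        ext e; simp [edgesOf]
      rw [this, hnorm]
    have hSvnonneg : 0 ≤ sSup Sv := le_csSup hSvbdd hzero
    apply Real.sSup_le ?_ hSvnonneg
    rintro x ⟨E', hE'G, hE'w, rfl⟩
    -- the cover-weight infimum is attained
    have hcovne : ({x : ℝ | ∃ C : Finset V, IsCover C E' ∧ x = ∑ v ∈ C, w v}).Nonempty := by
      refine ⟨∑ v ∈ (Finset.univ : Finset V), w v, Finset.univ, ?_, rfl⟩
      intro e _
      induction e using Sym2.ind with
      | _ a b => exact ⟨a, Finset.mem_univ a, by simp⟩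
    obtain ⟨C, hCcov, hCeq⟩ := hcovne.csInf_mem (coverSet_finite w E')
    have hCb : (∑ v ∈ C, w v) ≤ b := by
      rw [← hCeq]; exact hE'w
    have hsub' : E' ⊆ edgesOf G C := by
      intro e he
      simp only [edgesOf, Finset.mem_filter]
      exact ⟨Finset.mem_univ e, hE'G e he, hCcov e he⟩
    calc fe E' ≤ fe (edgesOf G C) := hmono _ _ hsub'
      _ ≤ sSup Sv := le_csSup hSvbdd ⟨C, hCb, rfl⟩
end

section
/- The function f(E') = log det(I_init + Σ_{e∈E'} p(e)·I_e) − log det(I_init), where I_init is positive definite and each I_e is positive semidefinite with p(e) > 0, is normalized, monotone, and submodular on subsets of the finite index set E. -/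
open Finset Matrix
open scoped MatrixOrder

section Aux

variable {n : Type*} [Fintype n] [DecidableEq n]

/-- det (1 + C) ≥ 1 for PSD C. -/
lemma aux_det_one_add_psd {C : Matrix n n ℝ} (hC : C.PosSemidef) :
    1 ≤ (1 + C).det := by
  have hH := hC.isHermitian
  have hU : (hH.eigenvectorUnitary : Matrix n n ℝ) *
      star (hH.eigenvectorUnitary : Matrix n n ℝ) = 1 :=
    Matrix.mem_unitaryGroup_iff.mp hH.eigenvectorUnitary.2
  have h1 : 1 + C = (hH.eigenvectorUnitary : Matrix n n ℝ) *
      (1 + Matrix.diagonal (RCLike.ofReal ∘ hH.eigenvalues)) *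
      star (hH.eigenvectorUnitary : Matrix n n ℝ) := by
    rw [Matrix.mul_add, Matrix.add_mul, Matrix.mul_one, hU]
    conv_lhs => rw [hH.spectral_theorem, Unitary.conjStarAlgAut_apply]
  rw [h1, Matrix.det_mul_right_comm, hU, Matrix.one_mul]
  have h2 : (1 : Matrix n n ℝ) + Matrix.diagonal (RCLike.ofReal ∘ hH.eigenvalues) =
      Matrix.diagonal (fun i => 1 + hH.eigenvalues i) := by
    rw [← Matrix.diagonal_one, Matrix.diagonal_add]
    rfl
  rw [h2, Matrix.det_diagonal]
  have h3 : (1:ℝ) = ∏ _i : n, (1:ℝ) := by simp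
  rw [h3]
  refine Finset.prod_le_prod (fun i _ => zero_le_one) fun i _ => ?_
  have := hC.eigenvalues_nonneg i
  linarith

/-- det A ≤ det (A + B) for A posdef, B psd. -/
lemma aux_det_mono {A B : Matrix n n ℝ} (hA : A.PosDef) (hB : B.PosSemidef) :
    A.det ≤ (A + B).det := by
  set S := CFC.sqrt B with hSdef
  have hS : S * S = B := CFC.sqrt_mul_sqrt_self B hB.nonneg
  have hSH : Sᴴ = S := (CFC.sqrt_nonneg B).posSemidef.isHermitian
  have hAinv : A * A⁻¹ = 1 := Matrix.mul_nonsing_inv _ hA.det_pos.ne'.isUnit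
  have hsplit : A + B = A * (1 + A⁻¹ * S * S) := by
    rw [Matrix.mul_add, Matrix.mul_one, ← Matrix.mul_assoc, ← Matrix.mul_assoc, hAinv,
      Matrix.one_mul, hS]
  have hcomm : (1 + A⁻¹ * S * S).det = (1 + S * (A⁻¹ * S)).det :=
    Matrix.det_one_add_mul_comm (A⁻¹ * S) S
  have hpsd : (S * (A⁻¹ * S)).PosSemidef := by
    have := hA.inv.posSemidef.conjTranspose_mul_mul_same (B := S)
    rwa [hSH, Matrix.mul_assoc] at this
  have h1 : 1 ≤ (1 + S * (A⁻¹ * S)).det := aux_det_one_add_psd hpsd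
  calc A.det = A.det * 1 := (mul_one _).symm
    _ ≤ A.det * (1 + S * (A⁻¹ * S)).det :=
        mul_le_mul_of_nonneg_left h1 hA.det_pos.le
    _ = (A + B).det := by rw [hsplit, Matrix.det_mul, hcomm]

/-- Inverse is antitone: M⁻¹ - (M+Δ)⁻¹ is PSD. -/
lemma aux_inv_antitone {M Δ : Matrix n n ℝ} (hM : M.PosDef) (hΔ : Δ.PosSemidef) :
    (M⁻¹ - (M + Δ)⁻¹).PosSemidef := by
  set N := M + Δ with hN
  have hNpd : N.PosDef := hM.add_posSemidef hΔ
  have hMi : M * M⁻¹ = 1 := Matrix.mul_nonsing_inv _ hM.det_pos.ne'.isUnit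
  have hiM : M⁻¹ * M = 1 := Matrix.nonsing_inv_mul _ hM.det_pos.ne'.isUnit
  have hNi : N * N⁻¹ = 1 := Matrix.mul_nonsing_inv _ hNpd.det_pos.ne'.isUnit
  have hiN : N⁻¹ * N = 1 := Matrix.nonsing_inv_mul _ hNpd.det_pos.ne'.isUnit
  have e1 : M⁻¹ - N⁻¹ = N⁻¹ * Δ * M⁻¹ := by
    have h : N * (M⁻¹ - N⁻¹) = Δ * M⁻¹ := by
      rw [Matrix.mul_sub, hNi, hN, Matrix.add_mul, hMi]
      abel
    calc M⁻¹ - N⁻¹ = N⁻¹ * (N * (M⁻¹ - N⁻¹)) := by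
          rw [← Matrix.mul_assoc, hiN, Matrix.one_mul]
      _ = N⁻¹ * (Δ * M⁻¹) := by rw [h]
      _ = N⁻¹ * Δ * M⁻¹ := by rw [Matrix.mul_assoc]
  have e2 : M⁻¹ - N⁻¹ = M⁻¹ * Δ * N⁻¹ := by
    have h : (M⁻¹ - N⁻¹) * N = M⁻¹ * Δ := by
      rw [Matrix.sub_mul, hiN, hN, Matrix.mul_add, hiM]
      abel
    calc M⁻¹ - N⁻¹ = ((M⁻¹ - N⁻¹) * N) * N⁻¹ := by
          rw [Matrix.mul_assoc, hNi, Matrix.mul_one]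
      _ = M⁻¹ * Δ * N⁻¹ := by rw [h]
  have hM' : M⁻¹ = N⁻¹ + M⁻¹ * Δ * N⁻¹ := sub_eq_iff_eq_add'.mp e2
  have e3 : M⁻¹ - N⁻¹ = N⁻¹ * Δ * N⁻¹ + N⁻¹ * (Δ * M⁻¹ * Δ) * N⁻¹ := by
    rw [e1]
    calc N⁻¹ * Δ * M⁻¹ = N⁻¹ * Δ * (N⁻¹ + M⁻¹ * Δ * N⁻¹) := by conv_lhs => rw [hM']
      _ = N⁻¹ * Δ * N⁻¹ + N⁻¹ * (Δ * M⁻¹ * Δ) * N⁻¹ := by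
          rw [Matrix.mul_add]
          congr 1
          simp only [Matrix.mul_assoc]
  rw [e3]
  have hNiH : N⁻¹ᴴ = N⁻¹ := hNpd.inv.isHermitian
  have hΔH : Δᴴ = Δ := hΔ.isHermitian
  have t1 : (N⁻¹ * Δ * N⁻¹).PosSemidef := by
    have := hΔ.conjTranspose_mul_mul_same (B := N⁻¹)
    rwa [hNiH] at this
  have t2 : (N⁻¹ * (Δ * M⁻¹ * Δ) * N⁻¹).PosSemidef := by
    have hin : (Δ * M⁻¹ * Δ).PosSemidef := by
      have := hM.inv.posSemidef.conjTranspose_mul_mul_same (B := Δ)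
      rwa [hΔH] at this
    have := hin.conjTranspose_mul_mul_same (B := N⁻¹)
    rwa [hNiH] at this
  exact t1.add t2

/-- Core submodularity inequality at the determinant level. -/
lemma aux_det_submod {M Δ P : Matrix n n ℝ} (hM : M.PosDef)
    (hΔ : Δ.PosSemidef) (hP : P.PosSemidef) :
    (M + Δ + P).det * M.det ≤ (M + P).det * (M + Δ).det := by
  set N := M + Δ with hN
  have hNpd : N.PosDef := hM.add_posSemidef hΔ
  set S := CFC.sqrt P with hSdef
  have hS : S * S = P := CFC.sqrt_mul_sqrt_self P hP.nonneg
  have hSH : Sᴴ = S := (CFC.sqrt_nonneg P).posSemidef.isHermitian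
  -- ratio identities
  have ratio : ∀ (A : Matrix n n ℝ), A.PosDef →
      (A + P).det = A.det * (1 + S * A⁻¹ * S).det := by
    intro A hA
    have hAinv : A * A⁻¹ = 1 := Matrix.mul_nonsing_inv _ hA.det_pos.ne'.isUnit
    have hsplit : A + P = A * (1 + A⁻¹ * S * S) := by
      rw [Matrix.mul_add, Matrix.mul_one, ← Matrix.mul_assoc, ← Matrix.mul_assoc, hAinv,
        Matrix.one_mul, hS]
    rw [hsplit, Matrix.det_mul]
    congr 1
    calc (1 + A⁻¹ * S * S).det = (1 + S * (A⁻¹ * S)).det :=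
        Matrix.det_one_add_mul_comm (A⁻¹ * S) S
      _ = (1 + S * A⁻¹ * S).det := by rw [Matrix.mul_assoc]
  have rM := ratio M hM
  have rN := ratio N hNpd
  -- key comparison
  have hDpsd : (M⁻¹ - N⁻¹).PosSemidef := aux_inv_antitone hM hΔ
  have hconj : (S * (M⁻¹ - N⁻¹) * S).PosSemidef := by
    have := hDpsd.conjTranspose_mul_mul_same (B := S)
    rwa [hSH] at this
  have hNmat : (1 + S * N⁻¹ * S).PosDef := by
    have : (S * N⁻¹ * S).PosSemidef := by
      have := hNpd.inv.posSemidef.conjTranspose_mul_mul_same (B := S)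
      rwa [hSH] at this
    exact Matrix.PosDef.add_posSemidef Matrix.PosDef.one this
  have hsum : (1 : Matrix n n ℝ) + S * M⁻¹ * S
      = (1 + S * N⁻¹ * S) + S * (M⁻¹ - N⁻¹) * S := by
    rw [Matrix.mul_sub, Matrix.sub_mul]
    abel
  have key : (1 + S * N⁻¹ * S).det ≤ (1 + S * M⁻¹ * S).det := by
    rw [hsum]
    exact aux_det_mono hNmat hconj
  have hposM := hM.det_pos
  have hposN := hNpd.det_pos
  have h1 : (M + Δ + P).det = (N + P).det := by rw [hN]
  rw [h1, rN, rM]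
  calc N.det * (1 + S * N⁻¹ * S).det * M.det
      = (N.det * M.det) * (1 + S * N⁻¹ * S).det := by ring
    _ ≤ (N.det * M.det) * (1 + S * M⁻¹ * S).det :=
        mul_le_mul_of_nonneg_left key (mul_nonneg hposN.le hposM.le)
    _ = M.det * (1 + S * M⁻¹ * S).det * N.det := by ring

end Aux

/-- The D-criterion gain
`f(E') = log det (I_init + ∑_{e∈E'} p(e) • I_e) - log det I_init`
is normalized, monotone and submodular. -/
theorem fFIM_normalized_monotone_submodular
    {E : Type*} [Fintype E] [DecidableEq E] {d : ℕ}
    (Iinit : Matrix (Fin d) (Fin d) ℝ) (hinit : Iinit.PosDef)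
    (Ie : E → Matrix (Fin d) (Fin d) ℝ) (hIe : ∀ e, (Ie e).PosSemidef)
    (p : E → ℝ) (hp : ∀ e, 0 < p e ∧ p e ≤ 1) :
    (fun A : Finset E =>
        Real.log (Iinit + ∑ e ∈ A, p e • Ie e).det - Real.log Iinit.det) ∅ = 0 ∧
    (∀ A B : Finset E, A ⊆ B →
      (fun A : Finset E =>
        Real.log (Iinit + ∑ e ∈ A, p e • Ie e).det - Real.log Iinit.det) A ≤
      (fun A : Finset E =>
        Real.log (Iinit + ∑ e ∈ A, p e • Ie e).det - Real.log Iinit.det) B) ∧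
    (∀ A B : Finset E,
      (fun A : Finset E =>
        Real.log (Iinit + ∑ e ∈ A, p e • Ie e).det - Real.log Iinit.det) (A ∪ B) +
      (fun A : Finset E =>
        Real.log (Iinit + ∑ e ∈ A, p e • Ie e).det - Real.log Iinit.det) (A ∩ B) ≤
      (fun A : Finset E =>
        Real.log (Iinit + ∑ e ∈ A, p e • Ie e).det - Real.log Iinit.det) A +
      (fun A : Finset E =>
        Real.log (Iinit + ∑ e ∈ A, p e • Ie e).det - Real.log Iinit.det) B) := by
  -- each summand is PSD
  have hterm : ∀ e : E, (p e • Ie e).PosSemidef := by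
    intro e
    obtain ⟨hH, hq⟩ := hIe e
    constructor
    · show (p e • Ie e)ᴴ = p e • Ie e
      rw [Matrix.conjTranspose_smul, hH]
      simp
    · exact ((hIe e).smul (hp e).1.le).2
  have hsum : ∀ A : Finset E, (∑ e ∈ A, p e • Ie e).PosSemidef := by
    intro A
    induction A using Finset.induction_on with
    | empty => simpa using Matrix.PosSemidef.zero
    | insert a s h ih =>
        rw [Finset.sum_insert h]
        exact (hterm _).add ih
  have hMpd : ∀ A : Finset E, (Iinit + ∑ e ∈ A, p e • Ie e).PosDef :=
    fun A => hinit.add_posSemidef (hsum A)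
  refine ⟨by simp, ?_, ?_⟩
  · -- monotone
    intro A B hAB
    simp only
    have hsplit : (∑ e ∈ B, p e • Ie e) = (∑ e ∈ A, p e • Ie e) + ∑ e ∈ B \ A, p e • Ie e := by
      rw [add_comm, Finset.sum_sdiff hAB]
    have : (Iinit + ∑ e ∈ A, p e • Ie e).det ≤ (Iinit + ∑ e ∈ B, p e • Ie e).det := by
      rw [hsplit, ← add_assoc]
      exact aux_det_mono (hMpd A) (hsum _)
    have := Real.log_le_log (hMpd A).det_pos this
    linarith
  · -- submodular
    intro A B
    simp only
    set C := ∑ e ∈ A ∩ B, p e • Ie e with hC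
    set Δ := ∑ e ∈ A \ B, p e • Ie e with hΔ
    set P := ∑ e ∈ B \ A, p e • Ie e with hP
    have hA' : (∑ e ∈ A, p e • Ie e) = C + Δ := by
      rw [hC, hΔ, Finset.sum_inter_add_sum_sdiff]
    have hB' : (∑ e ∈ B, p e • Ie e) = C + P := by
      rw [hC, hP, Finset.inter_comm, Finset.sum_inter_add_sum_sdiff]
    have hU' : (∑ e ∈ A ∪ B, p e • Ie e) = C + Δ + P := by
      have hdisj : Disjoint A (B \ A) := Finset.disjoint_sdiff
      have h1 : A ∪ B = A ∪ (B \ A) := by rw [Finset.union_sdiff_self_eq_union]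
      rw [h1, Finset.sum_union hdisj, hA', hP]
    have hM0 : (Iinit + C).PosDef := hinit.add_posSemidef (hsum _)
    have hkey := aux_det_submod hM0 (hsum (A \ B)) (hsum (B \ A))
    -- rewrite matrices
    have eU : Iinit + ∑ e ∈ A ∪ B, p e • Ie e = (Iinit + C) + Δ + P := by
      rw [hU']; abel
    have eA : Iinit + ∑ e ∈ A, p e • Ie e = (Iinit + C) + Δ := by rw [hA']; abel
    have eB : Iinit + ∑ e ∈ B, p e • Ie e = (Iinit + C) + P := by rw [hB']; abel
    have eI : Iinit + ∑ e ∈ A ∩ B, p e • Ie e = Iinit + C := rfl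
    rw [eU, eA, eB, eI]
    rw [← hΔ, ← hP] at hkey
    have pU : (0:ℝ) < ((Iinit + C) + Δ + P).det := by
      have := (hMpd (A ∪ B)).det_pos; rwa [eU] at this
    have pA : (0:ℝ) < ((Iinit + C) + Δ).det := by
      have := (hMpd A).det_pos; rwa [eA] at this
    have pB : (0:ℝ) < ((Iinit + C) + P).det := by
      have := (hMpd B).det_pos; rwa [eB] at this
    have pI : (0:ℝ) < (Iinit + C).det := hM0.det_pos
    have hlog : Real.log (((Iinit + C) + Δ + P).det * (Iinit + C).det) ≤
        Real.log (((Iinit + C) + P).det * ((Iinit + C) + Δ).det) :=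
      Real.log_le_log (by positivity) hkey
    rw [Real.log_mul pU.ne' pI.ne', Real.log_mul pB.ne' pA.ne'] at hlog
    linarith
end

section
/- For a normalized monotone submodular function f on a finite ground set V and unit weights, the greedy algorithm that for b rounds adds an element with maximum marginal gain produces a set S_b with f(S_b) ≥ (1 − 1/e) · max{f(S) : |S| ≤ b}. -/
open Finset

/-- Nemhauser–Wolsey–Fisher: the greedy algorithm for maximizing a normalized
monotone submodular function under a cardinality constraint `b` achieves at
least a `(1 - 1/e)` fraction of the optimum. -/
theorem greedy_one_minus_inv_e
    {V : Type*} [Fintype V] [DecidableEq V]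
    (f : Finset V → ℝ)
    (hnonneg : ∀ A, 0 ≤ f A)
    (hnorm : f ∅ = 0)
    (hmono : ∀ A B, A ⊆ B → f A ≤ f B)
    (hsub : ∀ A B, f (A ∪ B) + f (A ∩ B) ≤ f A + f B)
    (b : ℕ)
    (S : ℕ → Finset V) (hS0 : S 0 = ∅)
    (hstep : ∀ n, n < b → ∃ v, v ∉ S n ∧ S (n + 1) = insert v (S n) ∧
      ∀ u, f (insert u (S n)) ≤ f (insert v (S n))) :
    ∀ T : Finset V, T.card ≤ b → (1 - 1 / Real.exp 1) * f T ≤ f (S b) := by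
  intro T hT
  -- diminishing returns
  have dim : ∀ (A B : Finset V) (v : V), A ⊆ B →
      f (insert v B) - f B ≤ f (insert v A) - f A := by
    intro A B v hAB
    by_cases hv : v ∈ B
    · rw [Finset.insert_eq_self.mpr hv]
      have := hmono A (insert v A) (Finset.subset_insert _ _)
      linarith
    · have h := hsub (insert v A) B
      have h1 : insert v A ∪ B = insert v B := by
        rw [Finset.insert_union, Finset.union_eq_right.mpr hAB]
      have h2 : insert v A ∩ B = A := by
        ext x
        simp only [Finset.mem_inter, Finset.mem_insert]
        constructor
        · rintro ⟨h | h, hB⟩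
          · exact absurd hB (h ▸ hv)
          · exact h
        · intro hx; exact ⟨Or.inr hx, hAB hx⟩
      rw [h1, h2] at h
      linarith
  have key : ∀ (T' A : Finset V),
      f (A ∪ T') ≤ f A + ∑ v ∈ T', (f (insert v A) - f A) := by
    intro T'
    induction T' using Finset.induction with
    | empty => intro A; simp
    | @insert a T' ha ih =>
      intro A
      rw [Finset.sum_insert ha]
      have h1 : A ∪ insert a T' = insert a (A ∪ T') := by
        rw [Finset.union_insert]
      have h2 := dim A (A ∪ T') a Finset.subset_union_left
      have h3 := ih A
      rw [h1]; linarith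
  by_cases hb0 : b = 0
  · subst hb0
    have hTe : T = ∅ := Finset.card_eq_zero.mp (Nat.le_zero.mp hT)
    subst hTe
    rw [hnorm, mul_zero]
    exact hnonneg _
  · have hbpos : 0 < b := Nat.pos_of_ne_zero hb0
    have hbR : (0:ℝ) < b := by exact_mod_cast hbpos
    have hfrac : (0:ℝ) ≤ 1 - 1/b := by
      rw [sub_nonneg, div_le_one hbR]
      exact_mod_cast hbpos
    have step : ∀ n, n < b →
        f T - f (S (n+1)) ≤ (1 - 1/(b:ℝ)) * (f T - f (S n)) := by
      intro n hn
      obtain ⟨v, hv, hSn1, hmax⟩ := hstep n hn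
      have hΔ : f T - f (S n) ≤ (b:ℝ) * (f (S (n+1)) - f (S n)) := by
        have h1 : f T ≤ f (S n ∪ T) := hmono _ _ Finset.subset_union_right
        have h2 := key T (S n)
        have h3 : ∑ u ∈ T, (f (insert u (S n)) - f (S n)) ≤
            (T.card : ℝ) * (f (S (n+1)) - f (S n)) := by
          rw [hSn1]
          calc ∑ u ∈ T, (f (insert u (S n)) - f (S n))
              ≤ ∑ _u ∈ T, (f (insert v (S n)) - f (S n)) :=
                Finset.sum_le_sum (fun u _ => by have := hmax u; linarith)
            _ = (T.card : ℝ) * (f (insert v (S n)) - f (S n)) := by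
                rw [Finset.sum_const, nsmul_eq_mul]
        have hΔ0 : 0 ≤ f (S (n+1)) - f (S n) := by
          rw [hSn1]
          have := hmono (S n) (insert v (S n)) (Finset.subset_insert _ _)
          linarith
        have h4 : (T.card : ℝ) * (f (S (n+1)) - f (S n)) ≤
            (b:ℝ) * (f (S (n+1)) - f (S n)) := by
          apply mul_le_mul_of_nonneg_right _ hΔ0
          exact_mod_cast hT
        linarith
      have hdiv : (f T - f (S n)) / b ≤ f (S (n+1)) - f (S n) := by
        rw [div_le_iff₀ hbR]
        linarith [mul_comm (b:ℝ) (f (S (n+1)) - f (S n))]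
      have hring : (1 - 1/(b:ℝ)) * (f T - f (S n))
          = (f T - f (S n)) - (f T - f (S n))/b := by ring
      linarith
    have iter : ∀ n, n ≤ b → f T - f (S n) ≤ (1 - 1/(b:ℝ))^n * f T := by
      intro n
      induction n with
      | zero => intro _; rw [hS0, hnorm]; simp
      | succ n ih =>
        intro hnb
        have hn : n < b := hnb
        calc f T - f (S (n+1)) ≤ (1 - 1/(b:ℝ)) * (f T - f (S n)) := step n hn
          _ ≤ (1 - 1/(b:ℝ)) * ((1 - 1/(b:ℝ))^n * f T) :=
              mul_le_mul_of_nonneg_left (ih (le_of_lt hn)) hfrac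
          _ = (1 - 1/(b:ℝ))^(n+1) * f T := by ring
    have hpow : (1 - 1/(b:ℝ))^b ≤ Real.exp (-1) := by
      have h1 : 1 - 1/(b:ℝ) ≤ Real.exp (-(1/b)) := by
        have := Real.add_one_le_exp (-(1/(b:ℝ)))
        linarith
      calc (1 - 1/(b:ℝ))^b ≤ (Real.exp (-(1/b)))^b := pow_le_pow_left₀ hfrac h1 b
        _ = Real.exp ((b:ℝ) * (-(1/b))) := (Real.exp_nat_mul _ b).symm
        _ = Real.exp (-1) := by
            rw [mul_neg, mul_one_div, div_self (ne_of_gt hbR)]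
    have hfin := iter b le_rfl
    have hOPT : 0 ≤ f T := hnonneg T
    have hmain : f T - f (S b) ≤ Real.exp (-1) * f T :=
      le_trans hfin (mul_le_mul_of_nonneg_right hpow hOPT)
    have he : Real.exp (-1) = 1 / Real.exp 1 := by
      rw [Real.exp_neg, one_div]
    rw [he] at hmain
    linarith
end

section
/- For a normalized monotone submodular function f and cardinality budget b, if the greedy algorithm is run for b + k rounds (k ≥ 0), the resulting set S satisfies f(S) ≥ (1 − e^{−(1+k/b)}) · max{f(T) : |T| ≤ b}. -/
open Finset

lemma marginal_sum_bound
    {V : Type*} [DecidableEq V]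
    (f : Finset V → ℝ)
    (hmono : ∀ A B, A ⊆ B → f A ≤ f B)
    (hsub : ∀ A B, f (A ∪ B) + f (A ∩ B) ≤ f A + f B)
    (A : Finset V) :
    ∀ T : Finset V, f (A ∪ T) ≤ f A + ∑ u ∈ T, (f (insert u A) - f A) := by
  intro T
  induction T using Finset.induction_on with
  | empty => simp
  | @insert x T' hx ih =>
    have hunion : (A ∪ T') ∪ insert x A = insert x (A ∪ T') := by
      ext y; simp; tauto
    have hsubA : A ⊆ (A ∪ T') ∩ insert x A := by
      intro y hy; simp [hy]
    have h1 := hsub (A ∪ T') (insert x A)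
    rw [hunion] at h1
    have h2 : f A ≤ f ((A ∪ T') ∩ insert x A) := hmono _ _ hsubA
    have h3 : f (A ∪ insert x T') ≤ f (A ∪ T') + (f (insert x A) - f A) := by
      rw [Finset.union_insert]; linarith
    rw [Finset.sum_insert hx]
    linarith

/-- Extended greedy guarantee: running the greedy algorithm for `b + k` rounds
achieves at least a `(1 - e^{-(1 + k/b)})` fraction of the optimum under the
cardinality budget `b`. -/
theorem greedy_extended_guarantee
    {V : Type*} [Fintype V] [DecidableEq V]
    (f : Finset V → ℝ)
    (hnonneg : ∀ A, 0 ≤ f A)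
    (hnorm : f ∅ = 0)
    (hmono : ∀ A B, A ⊆ B → f A ≤ f B)
    (hsub : ∀ A B, f (A ∪ B) + f (A ∩ B) ≤ f A + f B)
    (b k : ℕ) (hb : 1 ≤ b)
    (S : ℕ → Finset V) (hS0 : S 0 = ∅)
    (hstep : ∀ n, n < b + k → ∃ v, v ∉ S n ∧ S (n + 1) = insert v (S n) ∧
      ∀ u, f (insert u (S n)) ≤ f (insert v (S n))) :
    ∀ T : Finset V, T.card ≤ b →
      (1 - Real.exp (-(1 + (k : ℝ) / (b : ℝ)))) * f T ≤ f (S (b + k)) := by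
  intro T hT
  have hbpos : (0:ℝ) < b := by exact_mod_cast hb
  have hbR : (1:ℝ) ≤ b := by exact_mod_cast hb
  have hq0 : (0:ℝ) ≤ 1 - 1/(b:ℝ) := by
    rw [sub_nonneg, div_le_one hbpos]; exact hbR
  -- key recursion
  have key : ∀ n, n < b + k → f T - f (S (n+1)) ≤ (1 - 1/(b:ℝ)) * (f T - f (S n)) := by
    intro n hn
    obtain ⟨v, hv, hSn1, hbest⟩ := hstep n hn
    have hgain : ∀ u ∈ T, f (insert u (S n)) - f (S n) ≤ f (insert v (S n)) - f (S n) := by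
      intro u _; linarith [hbest u]
    have hg0 : 0 ≤ f (insert v (S n)) - f (S n) := by
      have := hmono _ _ (Finset.subset_insert v (S n)); linarith
    have hsum : f (S n ∪ T) ≤ f (S n) + ∑ u ∈ T, (f (insert u (S n)) - f (S n)) :=
      marginal_sum_bound f hmono hsub (S n) T
    have hsum2 : ∑ u ∈ T, (f (insert u (S n)) - f (S n)) ≤
        (T.card : ℝ) * (f (insert v (S n)) - f (S n)) := by
      calc ∑ u ∈ T, (f (insert u (S n)) - f (S n))
          ≤ ∑ _u ∈ T, (f (insert v (S n)) - f (S n)) := Finset.sum_le_sum hgain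
        _ = (T.card : ℝ) * (f (insert v (S n)) - f (S n)) := by
            rw [Finset.sum_const, nsmul_eq_mul]
    have hcard : (T.card : ℝ) * (f (insert v (S n)) - f (S n)) ≤
        (b:ℝ) * (f (insert v (S n)) - f (S n)) := by
      apply mul_le_mul_of_nonneg_right _ hg0
      exact_mod_cast hT
    have hTle : f T ≤ f (S n ∪ T) := hmono _ _ Finset.subset_union_right
    have hSeq : f (S (n+1)) = f (insert v (S n)) := by rw [hSn1]
    have h5 : f T ≤ f (S n) + (b:ℝ) * (f (S (n+1)) - f (S n)) := by
      rw [hSeq]; linarith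
    have h6 : (f T - f (S n))/(b:ℝ) ≤ f (S (n+1)) - f (S n) := by
      rw [div_le_iff₀ hbpos]; linarith
    have hexp : (1 - 1/(b:ℝ)) * (f T - f (S n)) =
        f T - f (S n) - (f T - f (S n))/(b:ℝ) := by ring
    rw [hexp]; linarith
  -- induction
  have main : ∀ n, n ≤ b + k → f T - f (S n) ≤ (1 - 1/(b:ℝ))^n * f T := by
    intro n
    induction n with
    | zero => intro _; simp [hS0, hnorm]
    | succ m ih =>
      intro hm
      have h1 := key m (by omega)
      have h2 := ih (by omega)
      calc f T - f (S (m+1)) ≤ (1 - 1/(b:ℝ)) * (f T - f (S m)) := h1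
        _ ≤ (1 - 1/(b:ℝ)) * ((1 - 1/(b:ℝ))^m * f T) :=
            mul_le_mul_of_nonneg_left h2 hq0
        _ = (1 - 1/(b:ℝ))^(m+1) * f T := by ring
  have hfin := main (b+k) le_rfl
  have hexp1 : 1 - 1/(b:ℝ) ≤ Real.exp (-(1/(b:ℝ))) := by
    have := Real.add_one_le_exp (-(1/(b:ℝ)))
    linarith
  have hpow : (1 - 1/(b:ℝ))^(b+k) ≤ Real.exp (-(1 + (k:ℝ)/(b:ℝ))) := by
    calc (1 - 1/(b:ℝ))^(b+k) ≤ (Real.exp (-(1/(b:ℝ))))^(b+k) :=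
          pow_le_pow_left₀ hq0 hexp1 _
      _ = Real.exp (((b+k : ℕ) : ℝ) * (-(1/(b:ℝ)))) := by
          rw [← Real.exp_nat_mul]
      _ = Real.exp (-(1 + (k:ℝ)/(b:ℝ))) := by
          congr 1
          push_cast
          field_simp
  have hT0 : 0 ≤ f T := hnonneg T
  have hmul : (1 - 1/(b:ℝ))^(b+k) * f T ≤ Real.exp (-(1 + (k:ℝ)/(b:ℝ))) * f T :=
    mul_le_mul_of_nonneg_right hpow hT0
  nlinarith [hfin]
end

section
/- If A and B are real symmetric matrices with A positive definite and B positive semidefinite, then for positive semidefinite M, the marginal gain g(M) = log det(A + B + M) − log det(A + B) satisfies g(M) ≤ log det(A + M) − log det(A). (Diminishing returns of log det, the key inequality behind submodularity of the D-criterion.) -/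
open Matrix

variable {n : Type*} [Fintype n] [DecidableEq n]

open scoped MatrixOrder in
noncomputable def Matrix.PosSemidef.sqrt {P : Matrix n n ℝ} (_ : P.PosSemidef) : Matrix n n ℝ :=
  CFC.sqrt P

open scoped MatrixOrder in
lemma Matrix.PosSemidef.sqrt_mul_self {P : Matrix n n ℝ} (hP : P.PosSemidef) :
    hP.sqrt * hP.sqrt = P :=
  CFC.sqrt_mul_sqrt_self P hP.nonneg

open scoped MatrixOrder in
lemma Matrix.PosSemidef.posSemidef_sqrt {P : Matrix n n ℝ} (hP : P.PosSemidef) :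
    hP.sqrt.PosSemidef :=
  Matrix.nonneg_iff_posSemidef.mp (CFC.sqrt_nonneg P)

lemma psd_det_nonneg {P : Matrix n n ℝ} (hP : P.PosSemidef) : 0 ≤ P.det := by
  rw [hP.isHermitian.det_eq_prod_eigenvalues]
  exact Finset.prod_nonneg fun i _ => by simpa using hP.eigenvalues_nonneg i

lemma one_le_det_one_add {R : Matrix n n ℝ} (hR : R.PosSemidef) :
    1 ≤ (1 + R).det := by
  have hH := hR.isHermitian
  have hU : (hH.eigenvectorUnitary : Matrix n n ℝ) * star (hH.eigenvectorUnitary : Matrix n n ℝ) = 1 :=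
    (Matrix.mem_unitaryGroup_iff).mp hH.eigenvectorUnitary.2
  have hU' : star (hH.eigenvectorUnitary : Matrix n n ℝ) * (hH.eigenvectorUnitary : Matrix n n ℝ) = 1 :=
    (Matrix.mem_unitaryGroup_iff').mp hH.eigenvectorUnitary.2
  have key : 1 + R = (hH.eigenvectorUnitary : Matrix n n ℝ) *
      (1 + Matrix.diagonal (RCLike.ofReal ∘ hH.eigenvalues)) *
      star (hH.eigenvectorUnitary : Matrix n n ℝ) := by
    rw [Matrix.mul_add, Matrix.add_mul, Matrix.mul_one, hU]
    conv_lhs => rw [hH.spectral_theorem, Unitary.conjStarAlgAut_apply]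
  rw [key, det_mul, det_mul, mul_comm, ← mul_assoc, ← det_mul, hU', det_one, one_mul]
  have : (1 + Matrix.diagonal (RCLike.ofReal ∘ hH.eigenvalues) : Matrix n n ℝ)
      = Matrix.diagonal (fun i => 1 + hH.eigenvalues i) := by
    rw [← Matrix.diagonal_one, Matrix.diagonal_add]
    rfl
  rw [this, det_diagonal]
  calc (1:ℝ) = ∏ _i : n, 1 := by simp
    _ ≤ ∏ i : n, (1 + hH.eigenvalues i) :=
      Finset.prod_le_prod (by simp) (fun i _ => by linarith [hR.eigenvalues_nonneg i])

lemma det_sqrt_pos {P : Matrix n n ℝ} (hP : P.PosDef) : 0 < hP.posSemidef.sqrt.det := by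
  have h2 : hP.posSemidef.sqrt.det * hP.posSemidef.sqrt.det = P.det := by
    rw [← det_mul, hP.posSemidef.sqrt_mul_self]
  have h3 := psd_det_nonneg hP.posSemidef.posSemidef_sqrt
  nlinarith [hP.det_pos]

lemma sqrt_conj_factor {P : Matrix n n ℝ} (hP : P.PosDef) (X : Matrix n n ℝ) :
    P + X = hP.posSemidef.sqrt *
      (1 + hP.posSemidef.sqrt⁻¹ * X * hP.posSemidef.sqrt⁻¹) * hP.posSemidef.sqrt := by
  set S := hP.posSemidef.sqrt with hSdef
  have hdet : IsUnit S.det := (det_sqrt_pos hP).ne'.isUnit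
  have hSS : S * S = P := hP.posSemidef.sqrt_mul_self
  rw [Matrix.mul_add, Matrix.add_mul, Matrix.mul_one, hSS]
  congr 1
  simp [Matrix.mul_assoc, Matrix.nonsing_inv_mul _ hdet,
    Matrix.mul_nonsing_inv_cancel_left _ _ hdet]

lemma det_le_det_add_psd {P Q : Matrix n n ℝ} (hP : P.PosDef) (hQ : Q.PosSemidef) :
    P.det ≤ (P + Q).det := by
  set S := hP.posSemidef.sqrt with hSdef
  have hS := hP.posSemidef.posSemidef_sqrt
  have hdetS := det_sqrt_pos hP
  have hinvH : (S⁻¹).IsHermitian := hS.isHermitian.inv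
  have hpsd : (S⁻¹ * Q * S⁻¹).PosSemidef := by
    have := hQ.mul_mul_conjTranspose_same S⁻¹
    rwa [hinvH.eq] at this
  rw [sqrt_conj_factor hP Q, det_mul, det_mul]
  have h1 := one_le_det_one_add hpsd
  have hPdet : P.det = S.det * 1 * S.det := by
    rw [mul_one, ← det_mul, hP.posSemidef.sqrt_mul_self]
  rw [hPdet]
  exact mul_le_mul_of_nonneg_right (mul_le_mul_of_nonneg_left h1 hdetS.le) hdetS.le

lemma det_one_add_add_le {B' M' : Matrix n n ℝ} (hB : B'.PosSemidef) (hM : M'.PosSemidef) :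
    (1 + B' + M').det ≤ (1 + B').det * (1 + M').det := by
  have hN : (1 + B' : Matrix n n ℝ).PosDef := Matrix.PosDef.one.add_posSemidef hB
  set T := hN.posSemidef.sqrt with hTdef
  have hT := hN.posSemidef.posSemidef_sqrt
  have hdetT := det_sqrt_pos hN
  have hdetTu : IsUnit T.det := hdetT.ne'.isUnit
  have hTT : T * T = 1 + B' := hN.posSemidef.sqrt_mul_self
  have hinvH : (T⁻¹).IsHermitian := hT.isHermitian.inv
  -- factor out 1 + B'
  have hTTdet : T.det * T.det = (1 + B').det := by rw [← det_mul, hTT]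
  have hfac : (1 + B' + M').det = (1 + B').det * (1 + T⁻¹ * M' * T⁻¹).det := by
    rw [sqrt_conj_factor hN M', det_mul, det_mul, ← hTTdet]
    ring
  -- rewrite the middle determinant
  set R := hM.sqrt with hRdef
  have hR := hM.posSemidef_sqrt
  have hRR : R * R = M' := hM.sqrt_mul_self
  have hmid : (1 + T⁻¹ * M' * T⁻¹).det = (1 + R * (T⁻¹ * T⁻¹) * R).det := by
    calc (1 + T⁻¹ * M' * T⁻¹).det = (1 + (T⁻¹ * M') * T⁻¹).det := by rw [Matrix.mul_assoc]
      _ = (1 + T⁻¹ * (T⁻¹ * M')).det := det_one_add_mul_comm _ _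
      _ = (1 + (T⁻¹ * T⁻¹ * R) * R).det := by
          congr 1; rw [← hRR]; noncomm_ring
      _ = (1 + R * (T⁻¹ * T⁻¹ * R)).det := det_one_add_mul_comm _ _
      _ = (1 + R * (T⁻¹ * T⁻¹) * R).det := by congr 1; noncomm_ring
  -- 1 - T⁻¹T⁻¹ is PSD
  have hTinv2 : (1 : Matrix n n ℝ) - T⁻¹ * T⁻¹ = T⁻¹ * B' * T⁻¹ := by
    have h1 : T⁻¹ * (T * T) * T⁻¹ = 1 := by
      rw [← Matrix.mul_assoc, Matrix.nonsing_inv_mul _ hdetTu,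
        Matrix.one_mul, Matrix.mul_nonsing_inv _ hdetTu]
    calc (1 : Matrix n n ℝ) - T⁻¹ * T⁻¹ = T⁻¹ * (T * T) * T⁻¹ - T⁻¹ * T⁻¹ := by rw [h1]
      _ = T⁻¹ * B' * T⁻¹ := by rw [hTT]; noncomm_ring
  have hsub_psd : ((1 : Matrix n n ℝ) - T⁻¹ * T⁻¹).PosSemidef := by
    rw [hTinv2]
    have := hB.mul_mul_conjTranspose_same T⁻¹
    rwa [hinvH.eq] at this
  -- the conjugated middle matrix
  have hTinvpsd : (T⁻¹ * T⁻¹).PosSemidef := by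
    have := (Matrix.PosSemidef.one (n := n) (R := ℝ)).mul_mul_conjTranspose_same T⁻¹
    rwa [Matrix.mul_one, hinvH.eq] at this
  have hmidpd : (1 + R * (T⁻¹ * T⁻¹) * R).PosDef := by
    refine Matrix.PosDef.one.add_posSemidef ?_
    have := hTinvpsd.mul_mul_conjTranspose_same R
    rwa [hR.isHermitian.eq] at this
  have hQpsd : (R * ((1 : Matrix n n ℝ) - T⁻¹ * T⁻¹) * R).PosSemidef := by
    have := hsub_psd.mul_mul_conjTranspose_same R
    rwa [hR.isHermitian.eq] at this
  have hsum : (1 + R * (T⁻¹ * T⁻¹) * R) + R * ((1 : Matrix n n ℝ) - T⁻¹ * T⁻¹) * R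
      = 1 + M' := by
    rw [← hRR]; noncomm_ring
  have hstep : (1 + R * (T⁻¹ * T⁻¹) * R).det ≤ (1 + M').det := by
    rw [← hsum]
    exact det_le_det_add_psd hmidpd hQpsd
  rw [hfac, hmid]
  exact mul_le_mul_of_nonneg_left hstep hN.det_pos.le

/-- Diminishing returns of `log det`: the marginal gain of adding `M` on top of
`A + B` is at most the marginal gain of adding `M` on top of `A`. -/
theorem logdet_diminishing_returns {d : ℕ}
    (A B M : Matrix (Fin d) (Fin d) ℝ)
    (hA : A.PosDef) (hB : B.PosSemidef) (hM : M.PosSemidef) :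
    Real.log (A + B + M).det - Real.log (A + B).det ≤
      Real.log (A + M).det - Real.log A.det := by
  have hinvH : (hA.posSemidef.sqrt⁻¹).IsHermitian :=
    hA.posSemidef.posSemidef_sqrt.isHermitian.inv
  have hB' : (hA.posSemidef.sqrt⁻¹ * B * hA.posSemidef.sqrt⁻¹).PosSemidef := by
    have := hB.mul_mul_conjTranspose_same hA.posSemidef.sqrt⁻¹
    rwa [hinvH.eq] at this
  have hM' : (hA.posSemidef.sqrt⁻¹ * M * hA.posSemidef.sqrt⁻¹).PosSemidef := by
    have := hM.mul_mul_conjTranspose_same hA.posSemidef.sqrt⁻¹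
    rwa [hinvH.eq] at this
  have hdetA : hA.posSemidef.sqrt.det * hA.posSemidef.sqrt.det = A.det := by
    rw [← Matrix.det_mul, hA.posSemidef.sqrt_mul_self]
  have fac : ∀ X : Matrix (Fin d) (Fin d) ℝ,
      (A + X).det = A.det * (1 + hA.posSemidef.sqrt⁻¹ * X * hA.posSemidef.sqrt⁻¹).det := by
    intro X
    rw [sqrt_conj_factor hA X, Matrix.det_mul, Matrix.det_mul, ← hdetA]; ring
  have fBM : (A + B + M).det = A.det *
      (1 + hA.posSemidef.sqrt⁻¹ * B * hA.posSemidef.sqrt⁻¹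
         + hA.posSemidef.sqrt⁻¹ * M * hA.posSemidef.sqrt⁻¹).det := by
    rw [add_assoc, fac (B + M)]
    congr 2
    noncomm_ring
  have fB := fac B
  have fM := fac M
  have p0 : (0:ℝ) < A.det := hA.det_pos
  have pB := (Matrix.PosDef.one.add_posSemidef hB').det_pos
  have pM := (Matrix.PosDef.one.add_posSemidef hM').det_pos
  have pBM := ((Matrix.PosDef.one.add_posSemidef hB').add_posSemidef hM').det_pos
  have key := det_one_add_add_le hB' hM'
  rw [fBM, fB, fM, Real.log_mul p0.ne' pBM.ne', Real.log_mul p0.ne' pB.ne',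
    Real.log_mul p0.ne' pM.ne']
  have hlog : Real.log (1 + hA.posSemidef.sqrt⁻¹ * B * hA.posSemidef.sqrt⁻¹
         + hA.posSemidef.sqrt⁻¹ * M * hA.posSemidef.sqrt⁻¹).det ≤
      Real.log (1 + hA.posSemidef.sqrt⁻¹ * B * hA.posSemidef.sqrt⁻¹).det +
      Real.log (1 + hA.posSemidef.sqrt⁻¹ * M * hA.posSemidef.sqrt⁻¹).det := by
    rw [← Real.log_mul pB.ne' pM.ne']
    exact Real.log_le_log pBM key
  linarith
end
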